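/- The function 1 - z is a cyclic vector for the semigroup {T_n : n ≥ 1} on H²: if f ∈ H² is orthogonal to 1 - z^n for every n ≥ 1, then f = 0. Consequently the span of {1 - z^n : n ≥ 1} is dense in H². -/

import Mathlib

/-- 1 - z is cyclic for {T_n} on H² (identified with ℓ² via Maclaurin
    coefficients): if f ⟂ (1 - z^n) for all n ≥ 1, i.e. the 0th and nth coefficients of f
    agree for all n ≥ 1, then f = 0; consequently the span of {1 - z^n : n ≥ 1} is dense. -/
theorem stmt10 :
    (∀ a : ℕ → ℂ, Summable (fun n : ℕ => ‖a n‖ ^ 2) → (∀ n : ℕ, 1 ≤ n → a 0 = a n) → a = 0) ∧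
    ∀ a : ℕ → ℂ, Summable (fun n : ℕ => ‖a n‖ ^ 2) → ∀ ε : ℝ, 0 < ε →
      ∃ (N : ℕ) (c : ℕ → ℂ), ∑' j : ℕ,
        ‖a j - ∑ n ∈ Finset.Icc 1 N,
          c n * ((if j = 0 then 1 else 0) - if j = n then 1 else 0)‖ ^ 2 < ε ^ 2 := by
  constructor
  · intro a hs h
    have h0 : a 0 = 0 := by
      have ht : Filter.Tendsto (fun n : ℕ => ‖a n‖ ^ 2) Filter.atTop (nhds 0) :=
        hs.tendsto_atTop_zero
      have ht' : Filter.Tendsto (fun n : ℕ => ‖a n‖ ^ 2) Filter.atTop (nhds (‖a 0‖ ^ 2)) := by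
        apply Filter.Tendsto.congr' _ tendsto_const_nhds
        filter_upwards [Filter.eventually_ge_atTop 1] with n hn
        rw [h n hn]
      have heq := tendsto_nhds_unique ht' ht
      have : ‖a 0‖ = 0 := by nlinarith [norm_nonneg (a 0)]
      simpa using this
    funext n
    rcases Nat.eq_zero_or_pos n with rfl | hn
    · exact h0
    · simp [← h n hn, h0]
  · intro a hs ε hε
    -- choose tail cutoff M
    have ht : Filter.Tendsto (fun i => ∑' k, ‖a (k + i)‖ ^ 2) Filter.atTop (nhds 0) :=
      tendsto_sum_nat_add (fun n => ‖a n‖ ^ 2)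
    obtain ⟨i0, hi0⟩ := (Filter.eventually_atTop).1
      (ht.eventually (gt_mem_nhds (show (0:ℝ) < ε^2/8 by positivity)))
    set M := i0 with hM
    have htail : ∑' k, ‖a (k + (M + 1))‖ ^ 2 < ε ^ 2 / 8 := hi0 (M+1) (by omega)
    set S : ℂ := ∑ n ∈ Finset.range (M+1), a n with hS
    set K : ℕ := ⌈8 * ‖S‖ ^ 2 / ε ^ 2⌉₊ + 1 with hKdef
    have hKpos : (0:ℝ) < K := by positivity
    have hK1 : 8 * ‖S‖ ^ 2 / ε ^ 2 < (K:ℝ) := by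
      calc 8 * ‖S‖ ^ 2 / ε ^ 2 ≤ (⌈8 * ‖S‖ ^ 2 / ε ^ 2⌉₊ : ℝ) := Nat.le_ceil _
      _ < (K:ℝ) := by exact_mod_cast Nat.lt_succ_self _
    have hKbig : ‖S‖ ^ 2 / K < ε ^ 2 / 8 := by
      rw [div_lt_div_iff₀ hKpos (by norm_num)]
      rw [div_lt_iff₀ (by positivity)] at hK1
      nlinarith
    set N := M + K with hN
    set c : ℕ → ℂ := fun n => if n ≤ M then -a n else S / K with hc
    refine ⟨N, c, ?_⟩
    have hKC : ((K:ℂ)) ≠ 0 := Nat.cast_ne_zero.mpr (by simp [hKdef])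
    -- sum of c over Icc 1 N equals a 0
    have hIcc : Finset.Icc 1 N = Finset.Ioc 0 N := by
      ext x; simp [Nat.lt_iff_add_one_le]
    have hsum0 : ∑ n ∈ Finset.Icc 1 N, c n = a 0 := by
      have hsplit : ∑ n ∈ Finset.Ioc 0 M, c n + ∑ n ∈ Finset.Ioc M N, c n
          = ∑ n ∈ Finset.Ioc 0 N, c n :=
        Finset.sum_Ioc_consecutive _ (Nat.zero_le _) (by omega)
      have h1 : ∑ n ∈ Finset.Ioc 0 M, c n = a 0 - S := by
        have herase : Finset.Ioc 0 M = (Finset.range (M+1)).erase 0 := by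
          ext x; simp [Nat.lt_succ_iff]; omega
        have h1' : ∑ n ∈ Finset.Ioc 0 M, c n = ∑ n ∈ Finset.Ioc 0 M, (-a n) := by
          apply Finset.sum_congr rfl
          intro n hn
          simp only [Finset.mem_Ioc] at hn
          simp [hc, hn.2]
        have h1'' := Finset.add_sum_erase (Finset.range (M+1)) a
          (Finset.mem_range.mpr (by omega : 0 < M + 1))
        rw [h1', herase, Finset.sum_neg_distrib]
        rw [hS]
        linear_combination - h1''
      have h2 : ∑ n ∈ Finset.Ioc M N, c n = S := by
        have h2' : ∑ n ∈ Finset.Ioc M N, c n = ∑ n ∈ Finset.Ioc M N, (S / K) := by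
          apply Finset.sum_congr rfl
          intro n hn
          simp only [Finset.mem_Ioc] at hn
          simp [hc, Nat.not_le.mpr hn.1, Nat.not_le_of_lt hn.1]
        rw [h2', Finset.sum_const, Nat.card_Ioc, hN, Nat.add_sub_cancel_left, nsmul_eq_mul,
          mul_div_cancel₀ _ hKC]
      rw [hIcc, ← hsplit, h1, h2]; ring
    -- the inner sum at each j
    have hkey : ∀ j : ℕ, (∑ n ∈ Finset.Icc 1 N,
        c n * ((if j = 0 then (1:ℂ) else 0) - if j = n then 1 else 0))
        = if j = 0 then a 0 else (if j ∈ Finset.Icc 1 N then -c j else 0) := by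
      intro j
      by_cases hj : j = 0
      · subst hj
        simp only [if_pos rfl]
        rw [← hsum0]
        apply Finset.sum_congr rfl
        intro n hn
        simp only [Finset.mem_Icc] at hn
        have : ¬ (0 = n) := by omega
        simp [this]
      · simp only [if_neg hj, zero_sub, mul_neg, mul_ite, mul_one, mul_zero]
        rw [Finset.sum_neg_distrib, Finset.sum_ite_eq]
        split_ifs <;> simp
    -- the error term
    have hE : ∀ j : ℕ, a j - (∑ n ∈ Finset.Icc 1 N,
        c n * ((if j = 0 then (1:ℂ) else 0) - if j = n then 1 else 0))
        = if j < M + 1 then 0 else if j ≤ N then a j + S / K else a j := by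
      intro j
      rw [hkey j]
      by_cases hj : j = 0
      · subst hj; simp
      · rw [if_neg hj, hIcc]
        by_cases h1 : j ≤ M
        · have : j ∈ Finset.Ioc 0 N := by simp; omega
          rw [if_pos this, if_pos (by omega : j < M + 1)]
          simp [hc, h1]
        · by_cases h2 : j ≤ N
          · have : j ∈ Finset.Ioc 0 N := by simp; omega
            rw [if_pos this, if_neg (by omega : ¬ j < M + 1), if_pos h2]
            simp [hc, h1]
          · have : j ∉ Finset.Ioc 0 N := by simp; omega
            rw [if_neg this, if_neg (by omega : ¬ j < M + 1), if_neg h2]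
            ring
    -- bounding functions
    set b1 : ℕ → ℝ := fun j => if j < M + 1 then 0 else 2 * ‖a j‖ ^ 2 with hb1def
    set b2 : ℕ → ℝ := fun j => if j ∈ Finset.Icc (M+1) N then 2 * ‖S / (K:ℂ)‖ ^ 2 else 0 with hb2def
    have hb1 : Summable b1 := by
      apply Summable.of_nonneg_of_le (fun j => ?_) (fun j => ?_) (hs.mul_left 2)
      · simp only [hb1def]; split_ifs <;> positivity
      · simp only [hb1def]; split_ifs with h
        · positivity
        · exact le_refl _
    have hb2 : Summable b2 := by
      apply summable_of_ne_finset_zero (s := Finset.Icc (M+1) N)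
      intro j hj
      simp only [hb2def]
      exact if_neg hj
    have hpt : ∀ j : ℕ, ‖a j - (∑ n ∈ Finset.Icc 1 N,
        c n * ((if j = 0 then (1:ℂ) else 0) - if j = n then 1 else 0))‖ ^ 2 ≤ b1 j + b2 j := by
      intro j
      rw [hE j]
      by_cases h1 : j < M + 1
      · have hnm : j ∉ Finset.Icc (M+1) N := by simp; omega
        rw [if_pos h1]
        simp only [hb1def, hb2def, if_pos h1, if_neg hnm, norm_zero]
        norm_num
      · by_cases h2 : j ≤ N
        · have hmem : j ∈ Finset.Icc (M+1) N := by simp; omega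
          rw [if_neg h1, if_pos h2]
          simp only [hb1def, hb2def, if_neg h1, if_pos hmem]
          have := norm_add_le (a j) (S / (K:ℂ))
          nlinarith [norm_nonneg (a j), norm_nonneg (S / (K:ℂ)),
            sq_nonneg (‖a j‖ - ‖S / (K:ℂ)‖), norm_nonneg (a j + S / (K:ℂ))]
        · have hnm : j ∉ Finset.Icc (M+1) N := by simp; omega
          rw [if_neg h1, if_neg h2]
          simp only [hb1def, hb2def, if_neg h1, if_neg hnm]
          nlinarith [norm_nonneg (a j)]
    have hg : Summable (fun j : ℕ => ‖a j - (∑ n ∈ Finset.Icc 1 N,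
        c n * ((if j = 0 then (1:ℂ) else 0) - if j = n then 1 else 0))‖ ^ 2) :=
      Summable.of_nonneg_of_le (fun j => by positivity) hpt (hb1.add hb2)
    -- compute tsum of b1
    have htb1 : ∑' j, b1 j < ε ^ 2 / 4 := by
      have e1 := Summable.sum_add_tsum_nat_add (M+1) hb1
      have e2 : ∑ i ∈ Finset.range (M+1), b1 i = 0 := by
        apply Finset.sum_eq_zero
        intro i hi
        simp only [Finset.mem_range] at hi
        simp [hb1def, hi]
        intro h; omega
      have e3 : ∑' k, b1 (k + (M+1)) = 2 * ∑' k, ‖a (k + (M+1))‖ ^ 2 := by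
        rw [← tsum_mul_left]
        apply tsum_congr
        intro k
        simp [hb1def, Nat.not_lt.mpr (by omega : M + 1 ≤ k + (M+1))]
        intro h; omega
      rw [← e1, e2, e3, zero_add]
      linarith
    -- compute tsum of b2
    have htb2 : ∑' j, b2 j < ε ^ 2 / 4 := by
      have e1 : ∑' j, b2 j = ∑ j ∈ Finset.Icc (M+1) N, b2 j := by
        apply tsum_eq_sum
        intro j hj
        simp only [hb2def]
        exact if_neg hj
      have e2 : ∑ j ∈ Finset.Icc (M+1) N, b2 j = K * (2 * ‖S / (K:ℂ)‖ ^ 2) := by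
        have hval : ∀ j ∈ Finset.Icc (M+1) N, b2 j = 2 * ‖S / (K:ℂ)‖ ^ 2 := by
          intro j hj
          simp only [hb2def]
          exact if_pos hj
        rw [Finset.sum_congr rfl hval, Finset.sum_const, Nat.card_Icc, nsmul_eq_mul,
          (by omega : N + 1 - (M + 1) = K)]
      have e3 : (K:ℝ) * (2 * ‖S / (K:ℂ)‖ ^ 2) = 2 * (‖S‖ ^ 2 / K) := by
        rw [norm_div]
        simp only [Complex.norm_natCast]
        field_simp
      rw [e1, e2, e3]
      linarith
    calc ∑' j : ℕ, ‖a j - (∑ n ∈ Finset.Icc 1 N,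
          c n * ((if j = 0 then (1:ℂ) else 0) - if j = n then 1 else 0))‖ ^ 2
        ≤ ∑' j, (b1 j + b2 j) := Summable.tsum_le_tsum hpt hg (hb1.add hb2)
      _ = ∑' j, b1 j + ∑' j, b2 j := Summable.tsum_add hb1 hb2
      _ < ε ^ 2 / 4 + ε ^ 2 / 4 := by linarith
      _ < ε ^ 2 := by nlinarith
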